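/- Let k : ℕ → ℕ and suppose there is a constant C > 0 with k(n) ≤ C·√n for all n. Then strong detection is impossible: for every sequence of tests T_n : {0,1}ⁿ → {0,1}, liminf_{n→∞} [ P₀(T_n(Y) = 1) + P_{1,k(n)}(T_n(Y) = 0) ] > 0. Equivalently, limsup_{n→∞} d_TV(P₀, P_{1,k(n)}) < 1, where d_TV denotes total variation distance. -/

import Mathlib

open scoped Classical

/-- Probability of an event `E ⊆ {0,1}ⁿ` under the null model `P₀`
(i.i.d. uniform bits). -/
noncomputable def nullP (n : ℕ) (E : Set (Fin n → Bool)) : ℝ :=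
  ∑ y ∈ Finset.univ.filter (fun y : Fin n → Bool => y ∈ E), (1 / 2 : ℝ) ^ n

/-- Probability of an event `E ⊆ {0,1}ⁿ` under the planted model `P_{1,k}`:
a set `S*` of `k` positions is chosen uniformly at random, the bits at positions
of `S*` are set to one, and the remaining `n−k` bits are i.i.d. uniform. -/
noncomputable def plantedP (n k : ℕ) (E : Set (Fin n → Bool)) : ℝ :=
  (n.choose k : ℝ)⁻¹ *
    ∑ S ∈ (Finset.univ : Finset (Fin n)).powersetCard k,
      ∑ y ∈ Finset.univ.filter
          (fun y : Fin n → Bool => y ∈ E ∧ ∀ i ∈ S, y i = true),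
        (1 / 2 : ℝ) ^ (n - k)

/-- Total variation distance between `P₀` and `P_{1,k}` on `{0,1}ⁿ`. -/
noncomputable def dTV (n k : ℕ) : ℝ :=
  (1 / 2 : ℝ) * ∑ y : Fin n → Bool, |nullP n {y} - plantedP n k {y}|

namespace StrongDetection

open Finset

lemma card_fixed (n : ℕ) (S : Finset (Fin n)) :
    (Finset.univ.filter (fun y : Fin n → Bool => ∀ i ∈ S, y i = true)).card
      = 2 ^ (n - S.card) := by
  have e : {y : Fin n → Bool // ∀ i ∈ S, y i = true} ≃ ((Sᶜ : Finset (Fin n)) → Bool) :=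
    { toFun := fun y i => y.1 i.1
      invFun := fun g => ⟨fun i => if h : i ∈ Sᶜ then g ⟨i, h⟩ else true, by
        intro i hi
        simp [Finset.mem_compl, hi]⟩
      left_inv := by
        rintro ⟨y, hy⟩
        ext i
        by_cases h : i ∈ Sᶜ
        · simp [h]
        · simp only [Finset.mem_compl, not_not] at h
          simp [h, hy i h]
      right_inv := by
        intro g
        funext i
        simp [i.2] }
  have h1 : (Finset.univ.filter (fun y : Fin n → Bool => ∀ i ∈ S, y i = true)).card
      = Fintype.card {y : Fin n → Bool // ∀ i ∈ S, y i = true} := by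
    rw [Fintype.card_subtype]
  rw [h1, Fintype.card_congr e]
  simp [Finset.card_compl]

lemma count_subsets (n kk : ℕ) (y : Fin n → Bool) :
    ((Finset.univ.powersetCard kk).filter (fun S : Finset (Fin n) => ∀ i ∈ S, y i = true)).card
      = ((Finset.univ.filter fun i => y i = true).card).choose kk := by
  rw [← Finset.card_powersetCard]
  congr 1
  ext S
  simp only [Finset.mem_filter, Finset.mem_powersetCard, Finset.subset_iff, Finset.mem_univ,
    true_and, Finset.mem_filter]
  tauto

lemma swap_lemma (n kk : ℕ) (P : (Fin n → Bool) → Prop) [DecidablePred P] :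
    ∑ y ∈ Finset.univ.filter P,
        (((Finset.univ.filter fun i => y i = true).card).choose kk : ℝ)
      = ∑ S ∈ (Finset.univ : Finset (Fin n)).powersetCard kk,
          ((Finset.univ.filter fun y : Fin n → Bool => P y ∧ ∀ i ∈ S, y i = true).card : ℝ) := by
  have h1 : ∀ y : Fin n → Bool,
      (((Finset.univ.filter fun i => y i = true).card).choose kk : ℝ)
        = ∑ S ∈ (Finset.univ : Finset (Fin n)).powersetCard kk,
            (if ∀ i ∈ S, y i = true then (1:ℝ) else 0) := by
    intro y
    rw [Finset.sum_ite, Finset.sum_const_zero, add_zero, Finset.sum_const]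
    simp [count_subsets]
  simp_rw [h1]
  rw [Finset.sum_comm]
  refine Finset.sum_congr rfl fun S _ => ?_
  rw [← Finset.sum_filter, Finset.filter_filter]
  simp

/-- planted density of a point -/
noncomputable def pd (n kk : ℕ) (y : Fin n → Bool) : ℝ :=
  (n.choose kk : ℝ)⁻¹ *
    ((((Finset.univ.filter fun i => y i = true).card).choose kk : ℝ) * (1 / 2 : ℝ) ^ (n - kk))

lemma pd_nonneg (n kk : ℕ) (y : Fin n → Bool) : 0 ≤ pd n kk y := by
  unfold pd; positivity

lemma plantedP_eq_sum (n kk : ℕ) (E : Set (Fin n → Bool)) :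
    plantedP n kk E = ∑ y ∈ Finset.univ.filter (fun y => y ∈ E), pd n kk y := by
  unfold plantedP pd
  simp_rw [Finset.sum_const, nsmul_eq_mul]
  rw [← Finset.sum_mul, ← swap_lemma n kk (fun y => y ∈ E), Finset.sum_mul, Finset.mul_sum]

lemma sum_pd (n kk : ℕ) (h : kk ≤ n) : ∑ y : Fin n → Bool, pd n kk y = 1 := by
  have hs := swap_lemma n kk (fun _ => True)
  simp only [true_and, Finset.filter_true] at hs
  have hcard : ∀ S ∈ (Finset.univ : Finset (Fin n)).powersetCard kk,
      ((Finset.univ.filter fun y : Fin n → Bool => ∀ i ∈ S, y i = true).card : ℝ)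
        = 2 ^ (n - kk) := by
    intro S hS
    rw [Finset.mem_powersetCard_univ] at hS
    rw [card_fixed, hS]
    push_cast
    ring
  rw [Finset.sum_congr rfl hcard] at hs
  unfold pd
  rw [← Finset.mul_sum, ← Finset.sum_mul, hs]
  simp only [Finset.sum_const, Finset.card_powersetCard, Finset.card_univ, Fintype.card_fin,
    nsmul_eq_mul]
  have hch : ((n.choose kk : ℝ)) ≠ 0 := by exact_mod_cast (Nat.choose_pos h).ne'
  rw [div_pow, one_pow]
  field_simp

lemma df_bound (n kk m : ℕ) (hk : kk ≤ n) (hm : 2*m ≤ n + kk) :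
    ∀ j, j ≤ kk → 2^j * m.descFactorial j * n^j ≤ (n+kk)^j * n.descFactorial j := by
  intro j
  induction j with
  | zero => simp
  | succ j ih =>
    intro hj
    have hjk : j < kk := hj
    have ihj := ih (le_of_lt hjk)
    have hfac : 2 * (m - j) * n ≤ (n + kk) * (n - j) := by
      rcases le_or_gt j m with hjm | hjm
      · have hjn : j ≤ n := le_trans (le_of_lt hjk) hk
        zify [hjm, hjn]
        nlinarith [Int.ofNat_le.2 hm, Int.ofNat_le.2 hk, Int.ofNat_le.2 hjn,
          Int.ofNat_le.2 hjm]
      · have : m - j = 0 := Nat.sub_eq_zero_of_le (le_of_lt hjm)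
        simp [this]
    calc 2^(j+1) * m.descFactorial (j+1) * n^(j+1)
        = (2 * (m - j) * n) * (2^j * m.descFactorial j * n^j) := by
          rw [Nat.descFactorial_succ]; ring
      _ ≤ ((n + kk) * (n - j)) * ((n+kk)^j * n.descFactorial j) :=
          Nat.mul_le_mul hfac ihj
      _ = (n+kk)^(j+1) * n.descFactorial (j+1) := by
          rw [Nat.descFactorial_succ]; ring

lemma choose_bound_nat (n kk m : ℕ) (hk : kk ≤ n) (hm : 2*m ≤ n + kk) :
    2^kk * m.choose kk * n^kk ≤ (n+kk)^kk * n.choose kk := by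
  have h := df_bound n kk m hk hm kk le_rfl
  rw [Nat.descFactorial_eq_factorial_mul_choose, Nat.descFactorial_eq_factorial_mul_choose] at h
  have h2 : kk.factorial * (2^kk * m.choose kk * n^kk)
      ≤ kk.factorial * ((n+kk)^kk * n.choose kk) := by
    calc kk.factorial * (2^kk * m.choose kk * n^kk)
        = 2^kk * (kk.factorial * m.choose kk) * n^kk := by ring
      _ ≤ (n+kk)^kk * (kk.factorial * n.choose kk) := h
      _ = kk.factorial * ((n+kk)^kk * n.choose kk) := by ring
  exact Nat.le_of_mul_le_mul_left h2 kk.factorial_pos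

lemma ratio_bound (n kk m : ℕ) (hk : kk ≤ n) (hm : 2*m ≤ n + kk) (C : ℝ) (hC : 0 < C)
    (hb : (kk:ℝ) ≤ C * Real.sqrt n) :
    (m.choose kk : ℝ) * 2^kk ≤ Real.exp (C^2) * n.choose kk := by
  rcases Nat.eq_zero_or_pos n with hn | hn
  · subst hn
    interval_cases kk
    have hm0 : m = 0 := by omega
    subst hm0
    simpa using Real.one_le_exp (by positivity)
  have hnR : (0:ℝ) < n := by exact_mod_cast hn
  have hnk : (0:ℝ) < (n:ℝ)^kk := by positivity
  have hcast : ((m.choose kk : ℝ) * 2^kk) * (n:ℝ)^kk ≤ ((n:ℝ)+kk)^kk * n.choose kk := by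
    have h2 : ((2^kk * m.choose kk * n^kk : ℕ) : ℝ) ≤ (((n+kk)^kk * n.choose kk : ℕ) : ℝ) :=
      Nat.cast_le.2 (choose_bound_nat n kk m hk hm)
    push_cast at h2
    nlinarith [h2]
  have hpow : ((n:ℝ)+kk)^kk = (1 + (kk:ℝ)/n)^kk * (n:ℝ)^kk := by
    rw [← mul_pow]; congr 1; field_simp
  have hre : (1 + (kk:ℝ)/n)^kk * (n:ℝ)^kk * (n.choose kk : ℝ)
      = ((1 + (kk:ℝ)/n)^kk * n.choose kk) * (n:ℝ)^kk := by ring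
  rw [hpow, hre] at hcast
  have hquot : (m.choose kk : ℝ) * 2^kk ≤ (1 + (kk:ℝ)/n)^kk * n.choose kk :=
    le_of_mul_le_mul_right hcast hnk
  have hexp : (1 + (kk:ℝ)/n)^kk ≤ Real.exp (C^2) := by
    have h1 : (1 + (kk:ℝ)/n) ≤ Real.exp ((kk:ℝ)/n) := by
      rw [add_comm]; exact Real.add_one_le_exp _
    have h2 : (1 + (kk:ℝ)/n)^kk ≤ Real.exp ((kk:ℝ)/n) ^ kk :=
      pow_le_pow_left₀ (by positivity) h1 kk
    have h3 : Real.exp ((kk:ℝ)/n) ^ kk = Real.exp ((kk:ℝ) * ((kk:ℝ)/n)) := by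
      rw [← Real.exp_nat_mul]
    have h4 : (kk:ℝ) * ((kk:ℝ)/n) ≤ C^2 := by
      rw [mul_div_assoc']
      rw [div_le_iff₀ hnR]
      have hs : (kk:ℝ)^2 ≤ (C * Real.sqrt n)^2 := by
        apply sq_le_sq' _ hb
        nlinarith [Nat.cast_nonneg (α := ℝ) kk, mul_nonneg hC.le (Real.sqrt_nonneg (n:ℝ))]
      have : (C * Real.sqrt n)^2 = C^2 * n := by
        rw [mul_pow, Real.sq_sqrt (by positivity : (0:ℝ) ≤ (n:ℝ))]
      nlinarith [hs]
    calc (1 + (kk:ℝ)/n)^kk ≤ Real.exp ((kk:ℝ) * ((kk:ℝ)/n)) := by rw [← h3]; exact h2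
      _ ≤ Real.exp (C^2) := Real.exp_le_exp.2 h4
  calc (m.choose kk : ℝ) * 2^kk ≤ (1 + (kk:ℝ)/n)^kk * n.choose kk := hquot
    _ ≤ Real.exp (C^2) * n.choose kk :=
        mul_le_mul_of_nonneg_right hexp (Nat.cast_nonneg _)

lemma half_lemma (n kk : ℕ) (hkn : kk ≤ n) (S : Finset (Fin n)) (hS : S.card = kk) :
    (2:ℕ) ^ (n - kk) ≤ 2 * (Finset.univ.filter fun y : Fin n → Bool =>
      (2 * (Finset.univ.filter fun i => y i = true).card ≤ n + kk) ∧ ∀ i ∈ S, y i = true).card := by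
  classical
  set F := Finset.univ.filter (fun y : Fin n → Bool => ∀ i ∈ S, y i = true) with hF
  set cond := fun y : Fin n → Bool => 2 * (Finset.univ.filter fun i => y i = true).card ≤ n + kk
    with hcond
  have hsplit : (F.filter cond).card + (F.filter (fun y => ¬ cond y)).card = F.card :=
    Finset.card_filter_add_card_filter_not _
  set φ : (Fin n → Bool) → (Fin n → Bool) := fun y i => if i ∈ S then true else !(y i) with hφ
  have hones : ∀ y : Fin n → Bool, (∀ i ∈ S, y i = true) →
      (Finset.univ.filter fun i => y i = true).card
        = kk + (Sᶜ.filter fun i => y i = true).card := by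
    intro y hy
    have : (Finset.univ.filter fun i => y i = true)
        = S ∪ (Sᶜ.filter fun i => y i = true) := by
      ext i
      by_cases hiS : i ∈ S
      · simp [hiS, hy i hiS]
      · simp [hiS]
    rw [this, Finset.card_union_of_disjoint, hS]
    exact Finset.disjoint_left.2 fun a ha hb => (Finset.mem_compl.1 (Finset.mem_filter.1 hb).1) ha
  have hφones : ∀ y : Fin n → Bool, (∀ i ∈ S, y i = true) →
      (Finset.univ.filter fun i => φ y i = true).card
        + (Finset.univ.filter fun i => y i = true).card = n + kk := by
    intro y hy
    have h1 := hones y hy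
    have h2 := hones (φ y) (by intro i hi; simp [hφ, hi])
    have h3 : (Sᶜ.filter fun i => φ y i = true) = (Sᶜ.filter fun i => ¬ (y i = true)) := by
      apply Finset.filter_congr
      intro i hi
      simp only [Finset.mem_compl] at hi
      simp [hφ, hi]
    have h4 : (Sᶜ.filter fun i => y i = true).card + (Sᶜ.filter fun i => ¬ (y i = true)).card
        = Sᶜ.card := Finset.card_filter_add_card_filter_not _
    have h6 := congrArg Finset.card h3
    have h5 : Sᶜ.card = n - kk := by
      rw [Finset.card_compl, hS]; simp
    omega
  have hinj : (F.filter (fun y => ¬ cond y)).card ≤ (F.filter cond).card := by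
    apply Finset.card_le_card_of_injOn φ
    · intro y hy
      simp only [Finset.mem_coe, Finset.mem_filter, hF, Finset.mem_univ, true_and] at hy ⊢
      obtain ⟨hyF, hyc⟩ := hy
      refine ⟨by intro i hi; simp [hφ, hi], ?_⟩
      have := hφones y hyF
      simp only [hcond] at hyc ⊢
      omega
    · intro y hy z hz hyz
      simp only [Finset.mem_coe, Finset.mem_filter, hF, Finset.mem_univ, true_and] at hy hz
      funext i
      by_cases hiS : i ∈ S
      · rw [hy.1 i hiS, hz.1 i hiS]
      · have := congrFun hyz i
        simp only [hφ, hiS, if_neg, Bool.not_not] at this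
        simpa using this
  have hFcard : F.card = 2 ^ (n - kk) := by
    rw [hF, card_fixed, hS]
  have : (Finset.univ.filter fun y : Fin n → Bool =>
      (2 * (Finset.univ.filter fun i => y i = true).card ≤ n + kk) ∧ ∀ i ∈ S, y i = true)
      = F.filter cond := by
    rw [hF, Finset.filter_filter]
    apply Finset.filter_congr
    intro y _
    tauto
  rw [this]
  omega

/-- The key lower bound on the overlap of the two measures. -/
lemma key_min (n kk : ℕ) (hkn : kk ≤ n) (C : ℝ) (hC : 0 < C)
    (hb : (kk:ℝ) ≤ C * Real.sqrt n) :
    Real.exp (-C^2) * (1/2) ≤ ∑ y : Fin n → Bool, min ((1/2:ℝ)^n) (pd n kk y) := by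
  classical
  set A := Finset.univ.filter
    (fun y : Fin n → Bool => 2 * (Finset.univ.filter fun i => y i = true).card ≤ n + kk) with hA
  have hchpos : (0:ℝ) < (n.choose kk : ℝ) := by exact_mod_cast Nat.choose_pos hkn
  -- pointwise bound on A
  have hpt : ∀ y ∈ A, Real.exp (-C^2) * pd n kk y ≤ min ((1/2:ℝ)^n) (pd n kk y) := by
    intro y hy
    rw [hA, Finset.mem_filter] at hy
    have hcond := hy.2
    have hpd : pd n kk y ≤ Real.exp (C^2) * (1/2:ℝ)^n := by
      unfold pd
      set m := (Finset.univ.filter fun i => y i = true).card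
      have hr := ratio_bound n kk m hkn hcond C hC hb
      have hsplitpow : ((1:ℝ)/2)^n = (1/2:ℝ)^(n-kk) * (1/2:ℝ)^kk := by
        rw [← pow_add]
        congr 1
        omega
      rw [hsplitpow]
      rw [inv_mul_le_iff₀ hchpos]
      have hone : (2:ℝ)^kk * ((1:ℝ)/2)^kk = 1 := by
        rw [← mul_pow]; norm_num
      have ht : (0:ℝ) ≤ (1/2:ℝ)^(n-kk) * (1/2:ℝ)^kk := by positivity
      have hmul := mul_le_mul_of_nonneg_right hr ht
      have hlhs : (m.choose kk : ℝ) * (1/2:ℝ)^(n-kk)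
          = ((m.choose kk : ℝ) * 2^kk) * ((1/2:ℝ)^(n-kk) * (1/2:ℝ)^kk) := by
        linear_combination (-((m.choose kk : ℝ) * (1/2:ℝ)^(n-kk))) * hone
      rw [hlhs]
      calc ((m.choose kk : ℝ) * 2^kk) * ((1/2:ℝ)^(n-kk) * (1/2:ℝ)^kk)
          ≤ (Real.exp (C^2) * n.choose kk) * ((1/2:ℝ)^(n-kk) * (1/2:ℝ)^kk) := hmul
        _ = (n.choose kk : ℝ) * (Real.exp (C^2) * ((1/2:ℝ)^(n-kk) * (1/2:ℝ)^kk)) := by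
            ring
    have h1 : Real.exp (-C^2) * pd n kk y ≤ (1/2:ℝ)^n := by
      rw [Real.exp_neg]
      rw [inv_mul_le_iff₀ (Real.exp_pos _)]
      exact hpd
    have h2 : Real.exp (-C^2) * pd n kk y ≤ pd n kk y := by
      have := Real.exp_le_one_iff.2 (by nlinarith : -C^2 ≤ 0)
      nlinarith [pd_nonneg n kk y]
    exact le_min h1 h2
  -- mass of A under the planted measure is at least 1/2
  have hmass : (1/2:ℝ) ≤ ∑ y ∈ A, pd n kk y := by
    unfold pd
    rw [← Finset.mul_sum, ← Finset.sum_mul]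
    rw [hA, swap_lemma n kk
      (fun y => 2 * (Finset.univ.filter fun i => y i = true).card ≤ n + kk)]
    have hlow : ∀ S ∈ (Finset.univ : Finset (Fin n)).powersetCard kk,
        ((2:ℝ)^(n-kk)) / 2 ≤ ((Finset.univ.filter fun y : Fin n → Bool =>
          (2 * (Finset.univ.filter fun i => y i = true).card ≤ n + kk)
            ∧ ∀ i ∈ S, y i = true).card : ℝ) := by
      intro S hS
      rw [Finset.mem_powersetCard_univ] at hS
      have := half_lemma n kk hkn S hS
      have hcast : ((2:ℕ)^(n-kk) : ℝ) ≤ 2 * ((Finset.univ.filter fun y : Fin n → Bool =>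
          (2 * (Finset.univ.filter fun i => y i = true).card ≤ n + kk)
            ∧ ∀ i ∈ S, y i = true).card : ℝ) := by
        exact_mod_cast this
      push_cast at hcast ⊢
      linarith
    have hsum : ∑ S ∈ (Finset.univ : Finset (Fin n)).powersetCard kk, ((2:ℝ)^(n-kk))/2
        ≤ ∑ S ∈ (Finset.univ : Finset (Fin n)).powersetCard kk,
          ((Finset.univ.filter fun y : Fin n → Bool =>
            (2 * (Finset.univ.filter fun i => y i = true).card ≤ n + kk)
              ∧ ∀ i ∈ S, y i = true).card : ℝ) :=
      Finset.sum_le_sum hlow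
    rw [Finset.sum_const, Finset.card_powersetCard, Finset.card_univ, Fintype.card_fin,
      nsmul_eq_mul] at hsum
    have hpos : (0:ℝ) < (1/2:ℝ)^(n-kk) * (n.choose kk : ℝ)⁻¹ := by positivity
    calc (1/2:ℝ)
        = ((n.choose kk : ℝ) * ((2:ℝ)^(n-kk)/2)) * ((1/2:ℝ)^(n-kk) * (n.choose kk : ℝ)⁻¹) := by
          rw [div_pow, one_pow]
          field_simp
      _ ≤ (∑ S ∈ (Finset.univ : Finset (Fin n)).powersetCard kk,
            ((Finset.univ.filter fun y : Fin n → Bool =>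
              (2 * (Finset.univ.filter fun i => y i = true).card ≤ n + kk)
                ∧ ∀ i ∈ S, y i = true).card : ℝ))
            * ((1/2:ℝ)^(n-kk) * (n.choose kk : ℝ)⁻¹) := by
          apply mul_le_mul_of_nonneg_right hsum hpos.le
      _ = (n.choose kk : ℝ)⁻¹ * ((∑ S ∈ (Finset.univ : Finset (Fin n)).powersetCard kk,
            ((Finset.univ.filter fun y : Fin n → Bool =>
              (2 * (Finset.univ.filter fun i => y i = true).card ≤ n + kk)
                ∧ ∀ i ∈ S, y i = true).card : ℝ)) * (1/2:ℝ)^(n-kk)) := by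
          ring
  calc Real.exp (-C^2) * (1/2)
      ≤ Real.exp (-C^2) * ∑ y ∈ A, pd n kk y :=
        mul_le_mul_of_nonneg_left hmass (Real.exp_pos _).le
    _ = ∑ y ∈ A, Real.exp (-C^2) * pd n kk y := Finset.mul_sum _ _ _
    _ ≤ ∑ y ∈ A, min ((1/2:ℝ)^n) (pd n kk y) := Finset.sum_le_sum hpt
    _ ≤ ∑ y : Fin n → Bool, min ((1/2:ℝ)^n) (pd n kk y) := by
        apply Finset.sum_le_sum_of_subset_of_nonneg (Finset.subset_univ A)
        intro y _ _
        exact le_min (by positivity) (pd_nonneg n kk y)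

lemma nullP_single (n : ℕ) (y : Fin n → Bool) : nullP n {y} = (1/2:ℝ)^n := by
  unfold nullP
  trans (∑ _z ∈ ({y} : Finset (Fin n → Bool)), ((1:ℝ)/2)^n)
  · apply Finset.sum_congr _ (fun _ _ => rfl)
    ext z
    simp [Set.mem_singleton_iff]
  · rw [Finset.sum_singleton]

lemma plantedP_single (n kk : ℕ) (y : Fin n → Bool) : plantedP n kk {y} = pd n kk y := by
  rw [plantedP_eq_sum]
  trans (∑ z ∈ ({y} : Finset (Fin n → Bool)), pd n kk z)
  · apply Finset.sum_congr _ (fun _ _ => rfl)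
    ext z
    simp [Set.mem_singleton_iff]
  · rw [Finset.sum_singleton]

lemma dTV_eq (n kk : ℕ) (hkn : kk ≤ n) :
    dTV n kk = 1 - ∑ y : Fin n → Bool, min ((1/2:ℝ)^n) (pd n kk y) := by
  unfold dTV
  have habs : ∀ y : Fin n → Bool, |nullP n {y} - plantedP n kk {y}|
      = (1/2:ℝ)^n + pd n kk y - 2 * min ((1/2:ℝ)^n) (pd n kk y) := by
    intro y
    rw [nullP_single, plantedP_single]
    rcases le_total ((1/2:ℝ)^n) (pd n kk y) with h | h
    · rw [abs_of_nonpos (by linarith), min_eq_left h]; ring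
    · rw [abs_of_nonneg (by linarith), min_eq_right h]; ring
  simp_rw [habs]
  rw [Finset.sum_sub_distrib, Finset.sum_add_distrib, sum_pd n kk hkn, ← Finset.mul_sum]
  have h2 : ∑ _y : Fin n → Bool, ((1:ℝ)/2)^n = 1 := by
    rw [Finset.sum_const, Finset.card_univ, nsmul_eq_mul]
    simp only [Fintype.card_fun, Fintype.card_fin, Fintype.card_bool]
    rw [div_pow, one_pow]
    field_simp
    norm_num
  rw [h2]
  ring

lemma nullP_le_one (n : ℕ) (E : Set (Fin n → Bool)) : nullP n E ≤ 1 := by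
  unfold nullP
  calc ∑ y ∈ Finset.univ.filter (fun y : Fin n → Bool => y ∈ E), ((1:ℝ)/2)^n
      ≤ ∑ _y : Fin n → Bool, ((1:ℝ)/2)^n := by
        apply Finset.sum_le_sum_of_subset_of_nonneg (Finset.subset_univ _)
        intro y _ _
        positivity
    _ = 1 := by
        rw [Finset.sum_const, Finset.card_univ, nsmul_eq_mul]
        simp only [Fintype.card_fun, Fintype.card_fin, Fintype.card_bool]
        rw [div_pow, one_pow]
        field_simp
        norm_num

lemma nullP_nonneg (n : ℕ) (E : Set (Fin n → Bool)) : 0 ≤ nullP n E := by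
  unfold nullP
  apply Finset.sum_nonneg
  intro y _
  positivity

lemma plantedP_le_one (n kk : ℕ) (hkn : kk ≤ n) (E : Set (Fin n → Bool)) :
    plantedP n kk E ≤ 1 := by
  rw [plantedP_eq_sum, ← sum_pd n kk hkn]
  apply Finset.sum_le_sum_of_subset_of_nonneg (Finset.subset_univ _)
  intro y _ _
  exact pd_nonneg n kk y

lemma plantedP_nonneg (n kk : ℕ) (E : Set (Fin n → Bool)) : 0 ≤ plantedP n kk E := by
  rw [plantedP_eq_sum]
  apply Finset.sum_nonneg
  intro y _
  exact pd_nonneg n kk y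

lemma error_ge (n kk : ℕ) (hkn : kk ≤ n) (T : (Fin n → Bool) → Bool) :
    ∑ y : Fin n → Bool, min ((1/2:ℝ)^n) (pd n kk y)
      ≤ nullP n {y | T y = true} + plantedP n kk {y | T y = false} := by
  classical
  have h1 : nullP n {y | T y = true}
      = ∑ y ∈ Finset.univ.filter (fun y : Fin n → Bool => T y = true), ((1:ℝ)/2)^n := by
    unfold nullP
    apply Finset.sum_congr _ (fun _ _ => rfl)
    ext y
    simp [Set.mem_setOf_eq]
  have h2 : plantedP n kk {y | T y = false}
      = ∑ y ∈ Finset.univ.filter (fun y : Fin n → Bool => ¬ (T y = true)), pd n kk y := by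
    rw [plantedP_eq_sum]
    apply Finset.sum_congr _ (fun _ _ => rfl)
    ext y
    simp [Set.mem_setOf_eq]
  rw [h1, h2]
  rw [← Finset.sum_filter_add_sum_filter_not Finset.univ (fun y : Fin n → Bool => T y = true)
    (fun y => min ((1/2:ℝ)^n) (pd n kk y))]
  apply add_le_add
  · apply Finset.sum_le_sum
    intro y _
    exact min_le_left _ _
  · apply Finset.sum_le_sum
    intro y _
    exact min_le_right _ _

end StrongDetection

/-- If `k(n) ≤ C·√n`, then strong detection is impossible: every sequence of tests
has total error bounded away from `0` along `n → ∞`; equivalently, the total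
variation distance between the null and planted models stays bounded away from `1`. -/
theorem stmt_8 (k : ℕ → ℕ) (hk : ∀ n, k n ≤ n) (C : ℝ) (hC : 0 < C)
    (hbound : ∀ n : ℕ, (k n : ℝ) ≤ C * Real.sqrt n) :
    (∀ T : (n : ℕ) → (Fin n → Bool) → Bool,
      0 < Filter.liminf
        (fun n : ℕ => nullP n {y | T n y = true} + plantedP n (k n) {y | T n y = false})
        Filter.atTop)
    ∧ Filter.limsup (fun n : ℕ => dTV n (k n)) Filter.atTop < 1 := by
  have hkey : ∀ n : ℕ, Real.exp (-C^2) * (1/2)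
      ≤ ∑ y : Fin n → Bool, min ((1/2:ℝ)^n) (StrongDetection.pd n (k n) y) :=
    fun n => StrongDetection.key_min n (k n) (hk n) C hC (hbound n)
  have hepos : (0:ℝ) < Real.exp (-C^2) * (1/2) := by positivity
  constructor
  · intro T
    have herr : ∀ n : ℕ, Real.exp (-C^2) * (1/2)
        ≤ nullP n {y | T n y = true} + plantedP n (k n) {y | T n y = false} :=
      fun n => (hkey n).trans (StrongDetection.error_ge n (k n) (hk n) (T n))
    have hbdd : ∀ n : ℕ,
        nullP n {y | T n y = true} + plantedP n (k n) {y | T n y = false} ≤ 2 := by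
      intro n
      have := StrongDetection.nullP_le_one n {y | T n y = true}
      have := StrongDetection.plantedP_le_one n (k n) (hk n) {y | T n y = false}
      linarith
    calc (0:ℝ) < Real.exp (-C^2) * (1/2) := hepos
      _ ≤ Filter.liminf
          (fun n : ℕ => nullP n {y | T n y = true} + plantedP n (k n) {y | T n y = false})
          Filter.atTop := by
        apply Filter.le_liminf_of_le
        · exact Filter.isCoboundedUnder_ge_of_le Filter.atTop hbdd
        · exact Filter.Eventually.of_forall herr
  · have hd : ∀ n : ℕ, dTV n (k n) ≤ 1 - Real.exp (-C^2) * (1/2) := by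
      intro n
      rw [StrongDetection.dTV_eq n (k n) (hk n)]
      linarith [hkey n]
    calc Filter.limsup (fun n : ℕ => dTV n (k n)) Filter.atTop
        ≤ 1 - Real.exp (-C^2) * (1/2) := by
          apply Filter.limsup_le_of_le
          · apply Filter.isCoboundedUnder_le_of_le Filter.atTop (x := 0)
            intro n
            unfold dTV
            apply mul_nonneg (by norm_num)
            apply Finset.sum_nonneg
            intro y _
            exact abs_nonneg _
          · exact Filter.Eventually.of_forall hd
      _ < 1 := by linarith
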